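/- Under the hypotheses of the frame identity (q₁, q₂ : [0, L] → ℝ of class C¹; v, e, w : [0, L] → ℝ³ of class C² with {v, e, w} orthonormal, v × e = −w, v × w = e, and vₛ = q₁ e + q₂ w, eₛ = −q₁ v, wₛ = −q₂ v), for each endpoint s₀ ∈ {0, L} the following equivalence holds: v(s₀) × vₛₛ(s₀) = 0 if and only if q₁ₛ(s₀) = q₂ₛ(s₀) = 0. In particular, if q = q₁ + i q₂ satisfies the Neumann conditions qₛ(0) = qₛ(L) = 0, then v satisfies the first-order compatibility condition v × vₛₛ = 0 at both endpoints. -/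

import Mathlib

open Real MeasureTheory Set

noncomputable section

/-- Euclidean dot product on ℝ³ (vectors as `Fin 3 → ℝ`). -/
def dot3 (a b : Fin 3 → ℝ) : ℝ := a 0 * b 0 + a 1 * b 1 + a 2 * b 2

/-- Euclidean norm on ℝ³. -/
def norm3 (a : Fin 3 → ℝ) : ℝ := Real.sqrt (dot3 a a)

/-- Cross product on ℝ³. -/
def cross3 (a b : Fin 3 → ℝ) : Fin 3 → ℝ :=
  ![a 1 * b 2 - a 2 * b 1, a 2 * b 0 - a 0 * b 2, a 0 * b 1 - a 1 * b 0]

/-- Partial derivative in the first (space) variable. -/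
def pS {E : Type*} [NormedAddCommGroup E] [NormedSpace ℝ E]
    (f : ℝ → ℝ → E) (s t : ℝ) : E := deriv (fun s' => f s' t) s

/-- Partial derivative in the second (time) variable. -/
def pT {E : Type*} [NormedAddCommGroup E] [NormedSpace ℝ E]
    (f : ℝ → ℝ → E) (s t : ℝ) : E := deriv (fun t' => f s t') t

/-- The Sobolev `H^m` norm on `(0, L)` of an ℝ³-valued function. -/
def sobNorm3 (m : ℕ) (L : ℝ) (f : ℝ → Fin 3 → ℝ) : ℝ :=
  Real.sqrt (∑ k ∈ Finset.range (m + 1), ∫ s in (0:ℝ)..L, norm3 (iteratedDeriv k f s) ^ 2)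

/-- The Sobolev `H^m` norm on `(0, L)` of a ℂ-valued function. -/
def sobNormC (m : ℕ) (L : ℝ) (f : ℝ → ℂ) : ℝ :=
  Real.sqrt (∑ k ∈ Finset.range (m + 1), ∫ s in (0:ℝ)..L, ‖iteratedDeriv k f s‖ ^ 2)

/-- Sup (`L^∞`) norm on `[0, L]`. -/
def supIcc (f : ℝ → ℝ) (L : ℝ) : ℝ := ⨆ s : Set.Icc (0:ℝ) L, |f (s : ℝ)|

/-- at each endpoint, `v × vₛₛ = 0` iff `q₁ₛ = q₂ₛ = 0` there; in particular
Neumann conditions for `q = q₁ + i q₂` give the first-order compatibility condition for `v`. -/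
theorem endpoint_compatibility_iff_neumann
    (L : ℝ) (hL : 0 < L)
    (q₁ q₂ q₁' q₂' : ℝ → ℝ) (v v' v'' e w : ℝ → Fin 3 → ℝ)
    (hq₁ : ∀ s ∈ Set.Icc (0:ℝ) L, HasDerivWithinAt q₁ (q₁' s) (Set.Icc 0 L) s)
    (hq₂ : ∀ s ∈ Set.Icc (0:ℝ) L, HasDerivWithinAt q₂ (q₂' s) (Set.Icc 0 L) s)
    (hq₁'c : ContinuousOn q₁' (Set.Icc 0 L)) (hq₂'c : ContinuousOn q₂' (Set.Icc 0 L))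
    (horth : ∀ s ∈ Set.Icc (0:ℝ) L,
      dot3 (v s) (v s) = 1 ∧ dot3 (e s) (e s) = 1 ∧ dot3 (w s) (w s) = 1 ∧
      dot3 (v s) (e s) = 0 ∧ dot3 (v s) (w s) = 0 ∧ dot3 (e s) (w s) = 0)
    (hbasis : ∀ s ∈ Set.Icc (0:ℝ) L, Submodule.span ℝ {v s, e s, w s} = ⊤)
    (hcross1 : ∀ s ∈ Set.Icc (0:ℝ) L, cross3 (v s) (e s) = -(w s))
    (hcross2 : ∀ s ∈ Set.Icc (0:ℝ) L, cross3 (v s) (w s) = e s)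
    (hv : ∀ s ∈ Set.Icc (0:ℝ) L, HasDerivWithinAt v (v' s) (Set.Icc 0 L) s)
    (hv' : ∀ s ∈ Set.Icc (0:ℝ) L, HasDerivWithinAt v' (v'' s) (Set.Icc 0 L) s)
    (hv''c : ContinuousOn v'' (Set.Icc 0 L))
    (hvs : ∀ s ∈ Set.Icc (0:ℝ) L, v' s = q₁ s • e s + q₂ s • w s)
    (hes : ∀ s ∈ Set.Icc (0:ℝ) L,
      HasDerivWithinAt e (-(q₁ s) • v s) (Set.Icc 0 L) s)
    (hws : ∀ s ∈ Set.Icc (0:ℝ) L,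
      HasDerivWithinAt w (-(q₂ s) • v s) (Set.Icc 0 L) s) :
    (∀ s₀ ∈ ({0, L} : Set ℝ),
      (cross3 (v s₀) (v'' s₀) = 0 ↔ (q₁' s₀ = 0 ∧ q₂' s₀ = 0))) ∧
    ((q₁' 0 = 0 ∧ q₂' 0 = 0 ∧ q₁' L = 0 ∧ q₂' L = 0) →
      cross3 (v 0) (v'' 0) = 0 ∧ cross3 (v L) (v'' L) = 0) := by

  have key : ∀ s₀ ∈ Set.Icc (0:ℝ) L,
      (cross3 (v s₀) (v'' s₀) = 0 ↔ (q₁' s₀ = 0 ∧ q₂' s₀ = 0)) := by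
    intro s₀ hs₀
    -- derivative of q₁ • e + q₂ • w
    have hg : HasDerivWithinAt (fun s => q₁ s • e s + q₂ s • w s)
        ((q₁ s₀ • (-(q₁ s₀) • v s₀) + q₁' s₀ • e s₀)
          + (q₂ s₀ • (-(q₂ s₀) • v s₀) + q₂' s₀ • w s₀)) (Set.Icc 0 L) s₀ :=
      ((hq₁ s₀ hs₀).smul (hes s₀ hs₀)).add ((hq₂ s₀ hs₀).smul (hws s₀ hs₀))
    have hg' : HasDerivWithinAt v'
        ((q₁ s₀ • (-(q₁ s₀) • v s₀) + q₁' s₀ • e s₀)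
          + (q₂ s₀ • (-(q₂ s₀) • v s₀) + q₂' s₀ • w s₀)) (Set.Icc 0 L) s₀ :=
      hg.congr (fun x hx => hvs x hx) (hvs s₀ hs₀)
    have hud : UniqueDiffWithinAt ℝ (Set.Icc (0:ℝ) L) s₀ := uniqueDiffOn_Icc hL s₀ hs₀
    have hv2 : v'' s₀ = (q₁ s₀ • (-(q₁ s₀) • v s₀) + q₁' s₀ • e s₀)
          + (q₂ s₀ • (-(q₂ s₀) • v s₀) + q₂' s₀ • w s₀) := by
      rw [← (hv' s₀ hs₀).derivWithin hud, hg'.derivWithin hud]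
    set V := v s₀ with hV
    set E := e s₀ with hE
    set W := w s₀ with hW
    set a := q₁' s₀
    set b := q₂' s₀
    have hcr : cross3 V (v'' s₀) = a • cross3 V E + b • cross3 V W := by
      funext i
      rw [hv2]
      fin_cases i <;>
        simp [cross3, Pi.add_apply, Pi.smul_apply, Pi.neg_apply, smul_eq_mul] <;> ring
    rw [hcross1 s₀ hs₀, hcross2 s₀ hs₀] at hcr
    obtain ⟨_, hEE, hWW, _, _, hEW⟩ := horth s₀ hs₀
    rw [← hW] at hWW
    rw [← hE, ← hW] at hEW
    rw [← hE, ← hW] at hcr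
    simp only [dot3] at hEE hWW hEW
    constructor
    · intro h0
      rw [hcr] at h0
      have e0 := congrFun h0 0
      have e1 := congrFun h0 1
      have e2 := congrFun h0 2
      simp only [Pi.add_apply, Pi.smul_apply, Pi.neg_apply, Pi.zero_apply,
        smul_eq_mul] at e0 e1 e2
      constructor
      · linear_combination (-(W 0) * e0 - W 1 * e1 - W 2 * e2) + b * hEW - a * hWW
      · linear_combination (E 0 * e0 + E 1 * e1 + E 2 * e2) + a * hEW - b * hEE
    · rintro ⟨ha, hb⟩
      rw [hcr, ha, hb]
      simp
  have h0mem : (0:ℝ) ∈ Set.Icc (0:ℝ) L := ⟨le_refl _, hL.le⟩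
  have hLmem : L ∈ Set.Icc (0:ℝ) L := ⟨hL.le, le_refl _⟩
  constructor
  · intro s₀ hs₀
    rcases hs₀ with rfl | hs₀
    · exact key 0 h0mem
    · rw [Set.mem_singleton_iff] at hs₀
      exact hs₀ ▸ key L hLmem
  · rintro ⟨h1, h2, h3, h4⟩
    exact ⟨(key 0 h0mem).mpr ⟨h1, h2⟩, (key L hLmem).mpr ⟨h3, h4⟩⟩
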